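/- Consider the bounded lattice D = (ℕ ∪ {∞}) × {0,1,2} with the lexicographic order (each component carrying its usual linear order); since this order is total, join is the maximum. The operator ∇ defined by (a,b) ∇ (c,d) = (∞, 2) if max(b,d) = 2, and (a,b) ∇ (c,d) = (max(a,c), max(b,d) + 1) otherwise, is a widening operator on D, but it is not a strong widening operator. -/

import Mathlib

/-- A sequence is ultimately stable. -/
def UltimatelyStable {D : Type*} (a : ℕ → D) : Prop :=
  ∃ i₀, ∀ i, i₀ ≤ i → a i = a i₀

/-- `W` is a widening operator: it subsumes the join, and every widening sequence
`aᵢ = a_{i-1} ∇ bᵢ` is ultimately stable. -/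
def IsWidening {D : Type*} [Lattice D] (W : D → D → D) : Prop :=
  (∀ a b, a ⊔ b ≤ W a b) ∧
  ∀ (a b : ℕ → D), (∀ i, a (i + 1) = W (a i) (b (i + 1))) → UltimatelyStable a

/-- `W` is a strong widening operator. -/
def IsStrongWidening {D : Type*} [Lattice D] (W : D → D → D) : Prop :=
  (∀ a b, a ⊔ b ≤ W a b) ∧
  (∀ a b, b ≤ a → W a b = a) ∧
  ∀ (a b : ℕ → D), (∀ i, 1 ≤ i → a i ≤ a (i + 1)) →
    (∀ i, 1 ≤ i → W (a i) (b i) ≤ a (i + 1)) →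
    ∃ i₀, 1 ≤ i₀ ∧ ∀ i, i₀ ≤ i → b i ≤ a i

/-- The operator `(a,b) ∇ (c,d) = (∞, 2)` if `max b d = 2` and
`(a,b) ∇ (c,d) = (max a c, max b d + 1)` otherwise, on the lexicographic product
`(ℕ ∪ {∞}) × {0,1,2}`. -/
noncomputable def gasWiden : Lex (ℕ∞ × Fin 3) → Lex (ℕ∞ × Fin 3) → Lex (ℕ∞ × Fin 3) :=
  fun p q =>
    if max (ofLex p).2 (ofLex q).2 = (2 : Fin 3) then toLex ((⊤ : ℕ∞), (2 : Fin 3))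
    else toLex (max (ofLex p).1 (ofLex q).1, max (ofLex p).2 (ofLex q).2 + 1)


private lemma fin3_le_succ : ∀ m : Fin 3, m ≠ 2 → m ≤ m + 1 := by decide
private lemma fin3_step : ∀ m n : Fin 3, m ≠ 2 → max (m + 1) n ≠ 2 → max (m + 1) n + 1 = 2 := by
  decide
private lemma fin3_max_two : ∀ n : Fin 3, max 2 n = 2 := by decide

private lemma self_le_gasWiden (p q : Lex (ℕ∞ × Fin 3)) : p ≤ gasWiden p q := by
  unfold gasWiden
  split
  · exact le_top
  · rename_i h
    rw [← toLex_ofLex p, Prod.Lex.le_iff]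
    rcases (le_max_left (ofLex p).1 (ofLex q).1).lt_or_eq with h' | h'
    · exact Or.inl h'
    · exact Or.inr ⟨h', le_trans (le_max_left _ _) (fin3_le_succ _ h)⟩

private lemma gasWiden_comm (p q : Lex (ℕ∞ × Fin 3)) : gasWiden p q = gasWiden q p := by
  unfold gasWiden
  rw [max_comm (ofLex p).2, max_comm (ofLex p).1]

private lemma gasWiden_of_snd_two (p q : Lex (ℕ∞ × Fin 3)) (h : (ofLex p).2 = 2) :
    gasWiden p q = toLex ((⊤ : ℕ∞), (2 : Fin 3)) := by
  unfold gasWiden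
  rw [h, fin3_max_two, if_pos rfl]

private lemma snd_a2 (a b : ℕ → Lex (ℕ∞ × Fin 3))
    (hrec : ∀ i, a (i + 1) = gasWiden (a i) (b (i + 1))) :
    (ofLex (a 2)).2 = 2 := by
  have h1 := hrec 0
  have h2 := hrec 1
  unfold gasWiden at h1 h2
  split at h2
  · rw [h2]; simp
  · rename_i hne2
    split at h1
    · rw [h1] at hne2
      simp at hne2
      exact absurd hne2 ((by decide : ∀ x : Fin 3, ¬ 2 < x) _)
    · rename_i hne1
      rw [h1] at hne2 h2
      simp only [ofLex_toLex] at hne2 h2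
      rw [h2]
      simp only [ofLex_toLex]
      exact fin3_step _ _ hne1 hne2

private lemma a_top (a b : ℕ → Lex (ℕ∞ × Fin 3))
    (hrec : ∀ i, a (i + 1) = gasWiden (a i) (b (i + 1))) :
    ∀ i, 3 ≤ i → a i = toLex ((⊤ : ℕ∞), (2 : Fin 3)) := by
  intro i hi
  induction i with
  | zero => omega
  | succ n ih =>
    rcases Nat.lt_or_ge n 3 with h | h
    · have hn : n = 2 := by omega
      subst hn
      rw [hrec 2]
      exact gasWiden_of_snd_two _ _ (snd_a2 a b hrec)
    · rw [hrec n, ih h]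
      exact gasWiden_of_snd_two _ _ (by simp)

/-- On the bounded lattice `(ℕ ∪ {∞}) × {0,1,2}` with the lexicographic
order (a linear order, so join is max), the operator `gasWiden` is a widening operator, but
it is not a strong widening operator. -/
theorem gasWiden_widening_not_strong :
    IsWidening gasWiden ∧ ¬ IsStrongWidening gasWiden := by
  constructor
  · constructor
    · intro p q
      exact sup_le (self_le_gasWiden p q) (gasWiden_comm p q ▸ self_le_gasWiden q p)
    · intro a b hrec
      exact ⟨3, fun i hi => by rw [a_top a b hrec i hi, a_top a b hrec 3 le_rfl]⟩
  · rintro ⟨-, h2, -⟩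
    have h := h2 (toLex ((0 : ℕ∞), (0 : Fin 3))) (toLex ((0 : ℕ∞), (0 : Fin 3))) le_rfl
    unfold gasWiden at h
    rw [if_neg (by simp)] at h
    simp only [ofLex_toLex, toLex_inj, Prod.mk.injEq] at h
    exact absurd h.2 (by decide)
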